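/- Let ω ∈ ℝ \ {0} and let W : ℝ → ℝ be continuous with ∫_ℝ |W(s)| ds < ∞. Define the sequence of functions η⁽⁰⁾(s) = e^{iωs} and η⁽ᵏ⁺¹⁾(s) = −∫_{−∞}^s (1/ω)·sin(ω(s−σ))·W(σ)·η⁽ᵏ⁾(σ) dσ. Then for every k ∈ ℕ and every s ∈ ℝ, |η⁽ᵏ⁾(s)| ≤ (1/k!)·( |ω|^{−1} ∫_{−∞}^s |W(σ)| dσ )^k. -/

import Mathlib

open Set Filter MeasureTheory Topology

/-- The iterates of the perturbation series for the Jost solution of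
`η'' + ω²η = Wη`, given by `η⁽⁰⁾(s) = e^{iωs}` and
`η⁽ᵏ⁺¹⁾(s) = −∫_{−∞}^s ω⁻¹ sin(ω(s−σ)) W(σ) η⁽ᵏ⁾(σ) dσ`, satisfy
`|η⁽ᵏ⁾(s)| ≤ (1/k!)(|ω|⁻¹ ∫_{−∞}^s |W|)^k`. -/
theorem jost_iterates_bound
    (ω : ℝ) (hω : ω ≠ 0) (W : ℝ → ℝ) (hWc : Continuous W) (hWi : Integrable W)
    (η : ℕ → ℝ → ℂ)
    (h0 : ∀ s : ℝ, η 0 s = Complex.exp (Complex.I * ω * s))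
    (hrec : ∀ k : ℕ, ∀ s : ℝ, η (k + 1) s
      = -∫ σ in Iic s, ((1 / ω * Real.sin (ω * (s - σ)) * W σ : ℝ) : ℂ) * η k σ) :
    ∀ k : ℕ, ∀ s : ℝ,
      ‖η k s‖ ≤ (1 / k.factorial : ℝ) * (|ω|⁻¹ * ∫ σ in Iic s, |W σ|) ^ k := by
  have hWabs : Integrable (fun σ => |W σ|) := hWi.abs
  set F : ℝ → ℝ := fun s => ∫ σ in Iic s, |W σ| with hFdef
  have hF0 : ∀ s, 0 ≤ F s := fun s => integral_nonneg fun σ => abs_nonneg _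
  have hFle : ∀ s, F s ≤ ∫ σ, |W σ| := fun s =>
    setIntegral_le_integral hWabs (Eventually.of_forall fun σ => abs_nonneg _)
  have hsub : ∀ a b : ℝ, F b - F a = ∫ t in a..b, |W t| := fun a b =>
    intervalIntegral.integral_Iic_sub_Iic hWabs.integrableOn hWabs.integrableOn
  have hFder : ∀ x : ℝ, HasDerivAt F (|W x|) x := by
    intro x
    have h2 : HasDerivAt (fun u => F 0 + ∫ t in (0:ℝ)..u, |W t|) (|W x|) x :=
      (intervalIntegral.integral_hasDerivAt_right
        hWabs.intervalIntegrable
        (hWc.abs.stronglyMeasurableAtFilter _ _)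
        hWc.abs.continuousAt).const_add (F 0)
    have h1 : (fun u : ℝ => F 0 + ∫ t in (0:ℝ)..u, |W t|) = F := by
      funext u
      rw [← hsub 0 u]; ring
    rwa [h1] at h2
  have hFcont : Continuous F := continuous_iff_continuousAt.2 fun x => (hFder x).continuousAt
  have hFtend : Tendsto F atBot (𝓝 0) := by
    have h := intervalIntegral_tendsto_integral_Iic (0:ℝ) hWabs.integrableOn tendsto_id
    have h1 : Tendsto (fun a : ℝ => F 0 - ∫ t in a..(0:ℝ), |W t|) atBot (𝓝 (F 0 - F 0)) :=
      tendsto_const_nhds.sub h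
    rw [sub_self] at h1
    refine h1.congr fun a => ?_
    rw [← hsub a 0]; ring
  have hintk : ∀ (k : ℕ) (s : ℝ), IntegrableOn (fun σ => |W σ| * F σ ^ k) (Iic s) := by
    intro k s
    apply Integrable.integrableOn
    have hb : Integrable (fun σ => F σ ^ k * |W σ|) :=
      hWabs.bdd_mul (c := (∫ σ, |W σ|) ^ k) (hFcont.pow k).aestronglyMeasurable
        (Eventually.of_forall fun σ => by
          rw [Real.norm_eq_abs, abs_of_nonneg (pow_nonneg (hF0 σ) k)]
          exact pow_le_pow_left₀ (hF0 σ) (hFle σ) k)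
    simpa [mul_comm] using hb
  have key : ∀ (k : ℕ) (s : ℝ),
      ∫ σ in Iic s, |W σ| * F σ ^ k = F s ^ (k + 1) / ((k : ℝ) + 1) := by
    intro k s
    have hd : ∀ x ∈ Iic s, HasDerivAt (fun u => F u ^ (k + 1) / ((k : ℝ) + 1))
        (|W x| * F x ^ k) x := by
      intro x _
      have h := ((hFder x).pow (k + 1)).div_const ((k : ℝ) + 1)
      convert h using 1
      case e'_4 => rfl
      case e'_5 => rfl
      case e'_8 => rfl
      have hk1 : ((k : ℝ) + 1) ≠ 0 := by positivity
      rw [eq_div_iff hk1]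
      push_cast [Nat.add_sub_cancel]
      ring
    have htend : Tendsto (fun u => F u ^ (k + 1) / ((k : ℝ) + 1)) atBot (𝓝 0) := by
      have h := (hFtend.pow (k + 1)).div_const ((k : ℝ) + 1)
      simpa using h
    have h := integral_Iic_of_hasDerivAt_of_tendsto' hd (hintk k s) htend
    simpa using h
  intro k
  induction k with
  | zero =>
      intro s
      rw [h0 s]
      simp [Complex.norm_exp, Complex.mul_re, Complex.mul_im]
  | succ k ih =>
      intro s
      rw [hrec k s, norm_neg]
      have step1 : ‖∫ σ in Iic s, ((1 / ω * Real.sin (ω * (s - σ)) * W σ : ℝ) : ℂ) * η k σ‖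
          ≤ ∫ σ in Iic s, ‖((1 / ω * Real.sin (ω * (s - σ)) * W σ : ℝ) : ℂ) * η k σ‖ :=
        norm_integral_le_integral_norm _
      set c : ℝ := |ω|⁻¹ ^ (k + 1) * (1 / k.factorial) with hc
      have step2 : ∫ σ in Iic s, ‖((1 / ω * Real.sin (ω * (s - σ)) * W σ : ℝ) : ℂ) * η k σ‖
          ≤ ∫ σ in Iic s, c * (|W σ| * F σ ^ k) := by
        refine integral_mono_of_nonneg (Eventually.of_forall fun σ => norm_nonneg _)
          ((hintk k s).const_mul c) (Eventually.of_forall fun σ => ?_)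
        dsimp only
        rw [norm_mul, Complex.norm_real, Real.norm_eq_abs]
        have hb1 : |1 / ω * Real.sin (ω * (s - σ)) * W σ| ≤ |ω|⁻¹ * |W σ| := by
          rw [abs_mul, abs_mul]
          have hs1 : |Real.sin (ω * (s - σ))| ≤ 1 := Real.abs_sin_le_one _
          calc |1 / ω| * |Real.sin (ω * (s - σ))| * |W σ|
              ≤ |1 / ω| * 1 * |W σ| := by
                apply mul_le_mul_of_nonneg_right _ (abs_nonneg _)
                exact mul_le_mul_of_nonneg_left hs1 (abs_nonneg _)
            _ = |ω|⁻¹ * |W σ| := by rw [mul_one, one_div, abs_inv]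
        calc |1 / ω * Real.sin (ω * (s - σ)) * W σ| * ‖η k σ‖
            ≤ (|ω|⁻¹ * |W σ|) * ((1 / k.factorial : ℝ) * (|ω|⁻¹ * F σ) ^ k) := by
              apply mul_le_mul hb1 (ih σ) (norm_nonneg _)
              positivity
          _ = c * (|W σ| * F σ ^ k) := by rw [hc, mul_pow]; ring
      have step3 : ∫ σ in Iic s, c * (|W σ| * F σ ^ k)
          = (1 / (k + 1).factorial : ℝ) * (|ω|⁻¹ * F s) ^ (k + 1) := by
        rw [integral_const_mul, key k s, hc, mul_pow, Nat.factorial_succ]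
        have hk1 : ((k : ℝ) + 1) ≠ 0 := by positivity
        have hkf : ((k.factorial : ℝ)) ≠ 0 := Nat.cast_ne_zero.2 k.factorial_ne_zero
        push_cast
        field_simp
      calc ‖∫ σ in Iic s, ((1 / ω * Real.sin (ω * (s - σ)) * W σ : ℝ) : ℂ) * η k σ‖
          ≤ ∫ σ in Iic s, c * (|W σ| * F σ ^ k) := step1.trans step2
        _ = (1 / (k + 1).factorial : ℝ) * (|ω|⁻¹ * F s) ^ (k + 1) := step3
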